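/- The derivative of ΔC(b) with respect to b equals −(1/(2b·C_l(b)))²·ΔQ·exp(−ΔQ/b)·(1 − exp(−(u−l−ΔQ)/b))² minus a nonnegative term; more precisely, dΔC/db = −(1/(2b C_l(b)))² · [ΔQ(e^{−ΔQ/b} + e^{−(2(u−l)−ΔQ)/b}) + e^{−(u−l)/b}(u−l−ΔQ)(e^{ΔQ/b} + e^{−ΔQ/b}) − 2(u−l)e^{−(u−l)/b}]. -/

import Mathlib

open Real

/-- Normalisation constant of the bounded Laplace mechanism on `[l,u]`. -/
noncomputable def C (l u b q : ℝ) : ℝ :=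
  1 - (1 / 2) * (Real.exp (-(q - l) / b) + Real.exp (-(u - q) / b))

/-- `ΔC(b) = C_{l+ΔQ}(b) / C_l(b)`. -/
noncomputable def deltaC (l u ΔQ b : ℝ) : ℝ := C l u b (l + ΔQ) / C l u b l

lemma hasDerivAt_exp_div (c b : ℝ) (hb : b ≠ 0) :
    HasDerivAt (fun x : ℝ => Real.exp (c / x)) (Real.exp (c / b) * (-c / b ^ 2)) b := by
  have h1 : HasDerivAt (fun x : ℝ => c / x) (-c / b ^ 2) b := by
    have h := (hasDerivAt_inv hb).const_mul c
    have hfun : (fun x : ℝ => c / x) = fun x : ℝ => c * x⁻¹ := by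
      funext x; rw [div_eq_mul_inv]
    rw [hfun]
    refine h.congr_deriv ?_
    ring
  exact h1.exp

theorem deriv_deltaC_eq (l u ΔQ b : ℝ) (hlu : l < u)
    (hΔQ : 0 < ΔQ) (hΔQu : ΔQ ≤ u - l) (hb : 0 < b) :
    deriv (deltaC l u ΔQ) b
      = -(1 / (2 * b * C l u b l)) ^ 2 *
        (ΔQ * (Real.exp (-ΔQ / b) + Real.exp (-(2 * (u - l) - ΔQ) / b))
          + Real.exp (-(u - l) / b) * (u - l - ΔQ) *
              (Real.exp (ΔQ / b) + Real.exp (-ΔQ / b))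
          - 2 * (u - l) * Real.exp (-(u - l) / b)) := by
  have hb' : b ≠ 0 := ne_of_gt hb
  -- derivative of the numerator
  have hf : HasDerivAt (fun x : ℝ => C l u x (l + ΔQ))
      (-(1/2) * (Real.exp (-((l + ΔQ) - l) / b) * (((l + ΔQ) - l) / b ^ 2)
        + Real.exp (-(u - (l + ΔQ)) / b) * ((u - (l + ΔQ)) / b ^ 2))) b := by
    have h1 := hasDerivAt_exp_div (-((l + ΔQ) - l)) b hb'
    have h2 := hasDerivAt_exp_div (-(u - (l + ΔQ))) b hb'
    have base := ((h1.add h2).const_mul (1/2 : ℝ)).neg.const_add 1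
    have hfun : (fun x : ℝ => C l u x (l + ΔQ))
        = fun x : ℝ => 1 + -(1/2 * (Real.exp (-((l + ΔQ) - l) / x)
            + Real.exp (-(u - (l + ΔQ)) / x))) := by
      funext x; simp only [C]; ring
    rw [hfun]
    refine base.congr_deriv ?_
    ring
  have hg : HasDerivAt (fun x : ℝ => C l u x l)
      (-(1/2) * (Real.exp (-(l - l) / b) * ((l - l) / b ^ 2)
        + Real.exp (-(u - l) / b) * ((u - l) / b ^ 2))) b := by
    have h1 := hasDerivAt_exp_div (-(l - l)) b hb'
    have h2 := hasDerivAt_exp_div (-(u - l)) b hb'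
    have base := ((h1.add h2).const_mul (1/2 : ℝ)).neg.const_add 1
    have hfun : (fun x : ℝ => C l u x l)
        = fun x : ℝ => 1 + -(1/2 * (Real.exp (-(l - l) / x)
            + Real.exp (-(u - l) / x))) := by
      funext x; simp only [C]; ring
    rw [hfun]
    refine base.congr_deriv ?_
    ring
  have hexplt : Real.exp (-(u - l) / b) < 1 := by
    rw [Real.exp_lt_one_iff]
    apply div_neg_of_neg_of_pos _ hb
    linarith
  have hden : (0 : ℝ) < C l u b l := by
    unfold C
    have : -(l - l) / b = 0 := by ring
    rw [this, Real.exp_zero]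
    linarith
  have hquot := hf.div hg hden.ne'
  have heq : deltaC l u ΔQ = fun x : ℝ => C l u x (l + ΔQ) / C l u x l := rfl
  rw [heq, show (fun x : ℝ => C l u x (l + ΔQ) / C l u x l) = (fun x => C l u x (l + ΔQ)) / (fun x => C l u x l) from rfl, hquot.deriv]
  -- now the algebraic identity
  have e1 : -((l + ΔQ) - l) / b = -ΔQ / b := by ring
  have e2 : -(u - (l + ΔQ)) / b = -(u - l - ΔQ) / b := by ring
  have e3 : -(l - l) / b = 0 := by ring
  have e4 : Real.exp (-(u - l) / b)
      = Real.exp (-ΔQ / b) * Real.exp (-(u - l - ΔQ) / b) := by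
    rw [← Real.exp_add]; ring_nf
  have e5 : Real.exp (-(2 * (u - l) - ΔQ) / b)
      = Real.exp (-ΔQ / b) * (Real.exp (-(u - l - ΔQ) / b) * Real.exp (-(u - l - ΔQ) / b)) := by
    rw [← Real.exp_add, ← Real.exp_add]; ring_nf
  have e6' : Real.exp (-(u - l) / b) * Real.exp (ΔQ / b)
      = Real.exp (-(u - l - ΔQ) / b) := by
    rw [← Real.exp_add]; ring_nf
  have e6 : Real.exp (-(u - l) / b) * (u - l - ΔQ) * (Real.exp (ΔQ / b) + Real.exp (-ΔQ / b))
      = (u - l - ΔQ) * (Real.exp (-(u - l - ΔQ) / b)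
          + Real.exp (-(u - l) / b) * Real.exp (-ΔQ / b)) := by
    rw [← e6']; ring
  have hCf : C l u b (l + ΔQ)
      = 1 - 1/2 * (Real.exp (-ΔQ / b) + Real.exp (-(u - l - ΔQ) / b)) := by
    unfold C; rw [e1, e2]
  have hCl : C l u b l
      = 1 - 1/2 * (1 + Real.exp (-ΔQ / b) * Real.exp (-(u - l - ΔQ) / b)) := by
    unfold C; rw [e3, Real.exp_zero, e4]
  rw [e1, e2, e3, Real.exp_zero, e6, e4, e5, hCf, hCl]
  set x := Real.exp (-ΔQ / b) with hx
  set y := Real.exp (-(u - l - ΔQ) / b) with hy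
  have hx0 : 0 < x := Real.exp_pos _
  have hy0 : 0 < y := Real.exp_pos _
  have hg0 : (1 : ℝ) - 1/2 * (1 + x * y) ≠ 0 := by
    rw [← hCl]; exact hden.ne'
  have h1mxy : (1 : ℝ) - x * y ≠ 0 := by
    intro h
    apply hg0
    rw [show (1 : ℝ) - 1/2 * (1 + x * y) = ((1 : ℝ) - x * y)/2 from by ring, h]
    norm_num
  rw [show (1 : ℝ) - 1/2 * (1 + x * y) = ((1 : ℝ) - x * y)/2 from by ring]
  field_simp [h1mxy]
  ring
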